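/- Let r ≥ 2 be an integer and let n_1, ..., n_r be integers. Then there exist z_1, ..., z_r ∈ {0,1} such that for every i ∈ {1, ..., r}, Σ_{j ≠ i} z_j ≠ n_i. -/

import Mathlib

open Finset

private lemma sum_range_succ_ge (m : ℕ) (hm : 2 ≤ m) :
    m + 1 ≤ ∑ j ∈ range m, (j + 1) := by
  induction m with
  | zero => omega
  | succ k ih =>
    rw [Finset.sum_range_succ]
    rcases Nat.lt_or_ge k 2 with hk | hk
    · interval_cases k
      · omega
      · simp
    · have := ih hk; omega

theorem exists_zero_one_avoiding_sums (r : ℕ) (hr : 2 ≤ r) (n : Fin r → ℤ) :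
    ∃ z : Fin r → ℤ, (∀ i, z i = 0 ∨ z i = 1) ∧
      ∀ i : Fin r, (∑ j ∈ Finset.univ.erase i, z j) ≠ n i := by
  classical
  set A : ℕ → Finset (Fin r) := fun k => univ.filter (fun i => n i = (k : ℤ)) with hA
  set B : ℕ → Finset (Fin r) := fun k => univ.filter (fun i => n i = (k : ℤ) - 1) with hB
  have hcard_le : ∀ k, (A k).card ≤ r := fun k =>
    le_trans (card_filter_le _ _) (by simp)
  have hBcard_le : ∀ k, (B k).card ≤ r := fun k =>
    le_trans (card_filter_le _ _) (by simp)
  have hBA : ∀ k : ℕ, B (k + 1) = A k := by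
    intro k
    ext i
    simp only [hA, hB, mem_filter, mem_univ, true_and]
    push_cast
    constructor <;> intro h <;> linarith
  have hsum : ∀ m : ℕ, ∑ j ∈ range m, (A j).card ≤ r := by
    intro m
    have hdisj : ∀ x ∈ range m, ∀ y ∈ range m, x ≠ y → Disjoint (A x) (A y) := by
      intro x _ y _ hxy
      simp only [disjoint_left, hA, mem_filter, mem_univ, true_and]
      intro i h1 h2
      exact hxy (by exact_mod_cast h1 ▸ h2)
    rw [← Finset.card_biUnion hdisj]
    calc ((range m).biUnion A).card ≤ (univ : Finset (Fin r)).card :=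
          card_le_card (subset_univ _)
      _ = r := by simp
  have key : ∃ k, k ≤ r ∧ (A k).card ≤ k ∧ (B k).card + k ≤ r := by
    by_contra H
    push_neg at H
    have hcr : (A r).card ≤ r := hcard_le r
    have hex : ∃ k, (A k).card ≤ k := ⟨r, hcr⟩
    set k0 := Nat.find hex with hk0
    have h1 : (A k0).card ≤ k0 := Nat.find_spec hex
    have h2 : ∀ j, j < k0 → j + 1 ≤ (A j).card := by
      intro j hj
      have := Nat.find_min hex hj
      omega
    have hk0r : k0 ≤ r := Nat.find_min' hex hcr
    have h3 := H k0 hk0r h1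
    match hm : k0 with
    | 0 =>
      have := hBcard_le 0
      omega
    | 1 =>
      rw [hBA 0] at h3
      -- (A 0).card ≥ r, so A 0 = univ, all n i = 0
      have hc0 : (A 0).card = r := le_antisymm (hcard_le 0) (by omega)
      have hA0 : A 0 = univ := Finset.eq_univ_of_card _ (by rw [hc0]; simp)
      have hn0 : ∀ i, n i = 0 := by
        intro i
        have : i ∈ A 0 := hA0 ▸ mem_univ i
        simpa [hA] using this
      have hA2 : (A 2).card = 0 := by
        rw [Finset.card_eq_zero]
        ext i; simp [hA, hn0 i]
      have hB2 : (B 2).card = 0 := by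
        rw [hBA 1, Finset.card_eq_zero]
        ext i; simp [hA, hn0 i]
      have := H 2 hr (by omega)
      omega
    | 2 =>
      rw [hBA 1] at h3
      have hc0 : 1 ≤ (A 0).card := h2 0 (by omega)
      have hc1 : 2 ≤ (A 1).card := h2 1 (by omega)
      have hs4 := hsum 4
      have hs4' : (A 0).card + (A 1).card + (A 2).card + (A 3).card ≤ r := by
        simpa [Finset.sum_range_succ] using hs4
      -- r < (A 1).card + 2, so (A 1).card ≥ r - 1 ; then A 2, A 3 empty, r ≥ 3
      have hr3 : 3 ≤ r := by omega
      have := H 3 hr3 (by omega)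
      rw [hBA 2] at this
      omega
    | (m + 3) =>
      rw [hBA (m + 2)] at h3
      have hsplit : ∑ j ∈ range (m + 3), (A j).card
          = (∑ j ∈ range (m + 2), (A j).card) + (A (m + 2)).card := by
        rw [Finset.sum_range_succ]
      have hlow : ∑ j ∈ range (m + 2), (j + 1) ≤ ∑ j ∈ range (m + 2), (A j).card := by
        apply Finset.sum_le_sum
        intro j hj
        exact h2 j (by have := mem_range.mp hj; omega)
      have hgauss := sum_range_succ_ge (m + 2) (by omega)
      have := hsum (m + 3)
      omega
  obtain ⟨k, hkr, hak, hbk⟩ := key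
  have hsub : A k ⊆ (B k)ᶜ := by
    intro i hi
    simp only [hA, hB, mem_filter, mem_univ, true_and, Finset.mem_compl] at hi ⊢
    intro h2
    rw [hi] at h2
    omega
  have hcardc : k ≤ ((B k)ᶜ).card := by
    rw [Finset.card_compl]
    simp only [Fintype.card_fin]
    omega
  obtain ⟨S, hAS, hSB, hScard⟩ := Finset.exists_subsuperset_card_eq hsub hak hcardc
  refine ⟨fun i => if i ∈ S then 1 else 0, fun i => by by_cases h : i ∈ S <;> simp [h], ?_⟩
  intro i heq
  have hsumz : ∑ j ∈ univ.erase i, (fun i => if i ∈ S then (1:ℤ) else 0) j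
      = (S.card : ℤ) - (if i ∈ S then 1 else 0) := by
    rw [Finset.sum_erase_eq_sub (mem_univ i)]
    congr 1
    rw [Finset.sum_boole]
    congr 1
    simp [Finset.filter_mem_eq_inter]
  rw [hsumz, hScard] at heq
  by_cases hi : i ∈ S
  · rw [if_pos hi] at heq
    have hiB : i ∈ B k := by
      simp only [hB, mem_filter, mem_univ, true_and]
      omega
    exact absurd hiB (by simpa using hSB hi)
  · rw [if_neg hi] at heq
    have hiA : i ∈ A k := by
      simp only [hA, mem_filter, mem_univ, true_and]
      omega
    exact hi (hAS hiA)
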